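/- arXiv:2103.15034 — 2 statements merged into one kernel-verified Lean document; each statement's English description precedes it below -/
import Mathlib

section
/- If X is a real-valued random variable that is not almost surely constant, and f and g are strictly increasing real functions such that f(X) and g(X) have finite second moments, then Cov(f(X), g(X)) > 0. -/
open MeasureTheory ProbabilityTheory

private lemma memL2_integrable_mul {α : Type*} [MeasurableSpace α] {μ : Measure α}
    {u v : α → ℝ} (hu : MemLp u 2 μ) (hv : MemLp v 2 μ) :
    Integrable (fun x => u x * v x) μ := by
  have h : MemLp (u • v) 1 μ := hv.smul hu
  exact memLp_one_iff_integrable.mp h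

/-- If `X` is a real-valued random variable that is not almost surely constant, and `f`, `g`
are strictly increasing with `f(X), g(X) ∈ L²`, then `Cov(f(X), g(X)) > 0`. -/
theorem cov_of_strictMono_pos
    {Ω : Type*} [MeasurableSpace Ω] {μ : Measure Ω} [IsProbabilityMeasure μ]
    (X : Ω → ℝ) (hX : Measurable X)
    (hnc : ¬ ∃ c : ℝ, X =ᵐ[μ] fun _ => c)
    (f g : ℝ → ℝ) (hf : StrictMono f) (hg : StrictMono g)
    (hfX : MemLp (fun ω => f (X ω)) 2 μ) (hgX : MemLp (fun ω => g (X ω)) 2 μ) :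
    0 < (∫ ω, f (X ω) * g (X ω) ∂μ) - (∫ ω, f (X ω) ∂μ) * (∫ ω, g (X ω) ∂μ) := by
  set F : Ω → ℝ := fun ω => f (X ω) with hFdef
  set G : Ω → ℝ := fun ω => g (X ω) with hGdef
  have hfst : MeasurePreserving (Prod.fst : Ω × Ω → Ω) (μ.prod μ) μ :=
    ⟨measurable_fst, by simp⟩
  have hsnd : MeasurePreserving (Prod.snd : Ω × Ω → Ω) (μ.prod μ) μ :=
    ⟨measurable_snd, by simp⟩
  have hF1 : MemLp (fun p : Ω × Ω => F p.1) 2 (μ.prod μ) := hfX.comp_measurePreserving hfst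
  have hF2 : MemLp (fun p : Ω × Ω => F p.2) 2 (μ.prod μ) := hfX.comp_measurePreserving hsnd
  have hG1 : MemLp (fun p : Ω × Ω => G p.1) 2 (μ.prod μ) := hgX.comp_measurePreserving hfst
  have hG2 : MemLp (fun p : Ω × Ω => G p.2) 2 (μ.prod μ) := hgX.comp_measurePreserving hsnd
  have hA : Integrable (fun p : Ω × Ω => F p.1 * G p.1) (μ.prod μ) :=
    memL2_integrable_mul hF1 hG1
  have hB : Integrable (fun p : Ω × Ω => F p.1 * G p.2) (μ.prod μ) :=
    memL2_integrable_mul hF1 hG2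
  have hC : Integrable (fun p : Ω × Ω => F p.2 * G p.1) (μ.prod μ) :=
    memL2_integrable_mul hF2 hG1
  have hD : Integrable (fun p : Ω × Ω => F p.2 * G p.2) (μ.prod μ) :=
    memL2_integrable_mul hF2 hG2
  set H : Ω × Ω → ℝ := fun p => (F p.1 - F p.2) * (G p.1 - G p.2) with hHdef
  have hHeq : ∀ p : Ω × Ω, H p =
      (F p.1 * G p.1 - F p.1 * G p.2) - (F p.2 * G p.1 - F p.2 * G p.2) := by
    intro p; simp only [hHdef]; ring
  have hHint : Integrable H (μ.prod μ) := by
    have : Integrable (fun p : Ω × Ω =>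
        (F p.1 * G p.1 - F p.1 * G p.2) - (F p.2 * G p.1 - F p.2 * G p.2)) (μ.prod μ) :=
      (hA.sub hB).sub (hC.sub hD)
    exact this.congr (Filter.Eventually.of_forall fun p => (hHeq p).symm)
  -- nonnegativity
  have hHnonneg : ∀ p : Ω × Ω, 0 ≤ H p := by
    intro p
    rcases lt_trichotomy (X p.1) (X p.2) with h | h | h
    · have h1 : F p.1 - F p.2 < 0 := sub_neg.mpr (hf h)
      have h2 : G p.1 - G p.2 < 0 := sub_neg.mpr (hg h)
      exact le_of_lt (mul_pos_of_neg_of_neg h1 h2)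
    · simp [hHdef, hFdef, hGdef, h]
    · have h1 : 0 < F p.1 - F p.2 := sub_pos.mpr (hf h)
      have h2 : 0 < G p.1 - G p.2 := sub_pos.mpr (hg h)
      exact le_of_lt (mul_pos h1 h2)
  -- compute the four integrals
  have hIA : ∫ p, F p.1 * G p.1 ∂(μ.prod μ) = ∫ ω, F ω * G ω ∂μ := by
    have := integral_prod_mul (μ := μ) (ν := μ) (f := fun ω => F ω * G ω)
      (g := fun _ => (1 : ℝ))
    simpa using this
  have hID : ∫ p, F p.2 * G p.2 ∂(μ.prod μ) = ∫ ω, F ω * G ω ∂μ := by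
    have := integral_prod_mul (μ := μ) (ν := μ) (f := fun _ => (1 : ℝ))
      (g := fun ω => F ω * G ω)
    simpa using this
  have hIB : ∫ p, F p.1 * G p.2 ∂(μ.prod μ) = (∫ ω, F ω ∂μ) * ∫ ω, G ω ∂μ :=
    integral_prod_mul (f := F) (g := G)
  have hIC : ∫ p, F p.2 * G p.1 ∂(μ.prod μ) = (∫ ω, F ω ∂μ) * ∫ ω, G ω ∂μ := by
    have := integral_prod_mul (μ := μ) (ν := μ) (f := G) (g := F)
    calc ∫ p, F p.2 * G p.1 ∂(μ.prod μ) = ∫ p : Ω × Ω, G p.1 * F p.2 ∂(μ.prod μ) := by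
          congr 1; ext p; ring
      _ = (∫ ω, G ω ∂μ) * ∫ ω, F ω ∂μ := this
      _ = (∫ ω, F ω ∂μ) * ∫ ω, G ω ∂μ := mul_comm _ _
  have hIH : ∫ p, H p ∂(μ.prod μ)
      = 2 * ((∫ ω, F ω * G ω ∂μ) - (∫ ω, F ω ∂μ) * ∫ ω, G ω ∂μ) := by
    have e1 : ∫ p, H p ∂(μ.prod μ)
        = (∫ p, F p.1 * G p.1 ∂(μ.prod μ) - ∫ p, F p.1 * G p.2 ∂(μ.prod μ))
          - (∫ p, F p.2 * G p.1 ∂(μ.prod μ) - ∫ p, F p.2 * G p.2 ∂(μ.prod μ)) := by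
      calc ∫ p, H p ∂(μ.prod μ)
          = ∫ p, ((F p.1 * G p.1 - F p.1 * G p.2) - (F p.2 * G p.1 - F p.2 * G p.2))
              ∂(μ.prod μ) :=
            integral_congr_ae (Filter.Eventually.of_forall fun p => hHeq p)
        _ = (∫ p, (F p.1 * G p.1 - F p.1 * G p.2) ∂(μ.prod μ))
              - ∫ p, (F p.2 * G p.1 - F p.2 * G p.2) ∂(μ.prod μ) :=
            integral_sub (hA.sub hB) (hC.sub hD)
        _ = _ := by rw [integral_sub hA hB, integral_sub hC hD]
    rw [e1, hIA, hIB, hIC, hID]; ring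
  -- strict positivity of ∫ H
  have hH0 : 0 ≤ ∫ p, H p ∂(μ.prod μ) :=
    integral_nonneg hHnonneg
  have hHne : ∫ p, H p ∂(μ.prod μ) ≠ 0 := by
    intro h0
    have hae : H =ᵐ[μ.prod μ] 0 :=
      (integral_eq_zero_iff_of_nonneg hHnonneg hHint).mp h0
    have hXeq : ∀ᵐ p ∂(μ.prod μ), X p.1 = X p.2 := by
      filter_upwards [hae] with p hp
      simp only [Pi.zero_apply] at hp
      by_contra hne
      have hpos : 0 < H p := by
        rcases lt_or_gt_of_ne hne with h | h
        · exact mul_pos_of_neg_of_neg (sub_neg.mpr (hf h)) (sub_neg.mpr (hg h))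
        · exact mul_pos (sub_pos.mpr (hf h)) (sub_pos.mpr (hg h))
      exact ne_of_gt hpos hp
    have hfub : ∀ᵐ x ∂μ, ∀ᵐ y ∂μ, X x = X y :=
      Measure.ae_ae_of_ae_prod hXeq
    obtain ⟨x₀, hx₀⟩ := hfub.exists
    exact hnc ⟨X x₀, hx₀.mono fun y hy => hy.symm⟩
  have : 0 < ∫ p, H p ∂(μ.prod μ) := lt_of_le_of_ne hH0 (Ne.symm hHne)
  rw [hIH] at this
  linarith
end

section
/- If f and g are strictly increasing functions, X and Y are i.i.d., and E[(f(X) - f(Y))(g(X) - g(Y))] = 0, then X = Y almost surely, which (since X, Y are independent) implies X is almost surely constant. -/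
open MeasureTheory ProbabilityTheory

/-- If `f`, `g` are strictly increasing, `X` and `Y` are i.i.d., and
`E[(f(X) - f(Y)) (g(X) - g(Y))] = 0`, then `X = Y` a.s., which (by independence) implies
`X` is almost surely constant. -/
theorem eq_and_const_of_expectation_eq_zero
    {Ω : Type*} [MeasurableSpace Ω] {μ : Measure Ω} [IsProbabilityMeasure μ]
    (X Y : Ω → ℝ) (hX : Measurable X) (hY : Measurable Y)
    (hindep : IndepFun X Y μ) (hid : IdentDistrib X Y μ μ)
    (f g : ℝ → ℝ) (hf : StrictMono f) (hg : StrictMono g)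
    (hfX : MemLp (fun ω => f (X ω)) 2 μ) (hgX : MemLp (fun ω => g (X ω)) 2 μ)
    (hzero : ∫ ω, (f (X ω) - f (Y ω)) * (g (X ω) - g (Y ω)) ∂μ = 0) :
    X =ᵐ[μ] Y ∧ ∃ c : ℝ, X =ᵐ[μ] fun _ => c := by
  have hfm : Measurable f := hf.monotone.measurable
  have hgm : Measurable g := hg.monotone.measurable
  have hfY : MemLp (fun ω => f (Y ω)) 2 μ := ((hid.comp hfm).memLp_iff).mp hfX
  have hgY : MemLp (fun ω => g (Y ω)) 2 μ := ((hid.comp hgm).memLp_iff).mp hgX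
  have hF : MemLp (fun ω => f (X ω) - f (Y ω)) 2 μ := hfX.sub hfY
  have hG : MemLp (fun ω => g (X ω) - g (Y ω)) 2 μ := hgX.sub hgY
  have hint : Integrable (fun ω => (f (X ω) - f (Y ω)) * (g (X ω) - g (Y ω))) μ := by
    have h1 : MemLp ((fun ω => f (X ω) - f (Y ω)) • (fun ω => g (X ω) - g (Y ω))) 1 μ :=
      hG.smul hF (hpqr := ⟨by
        simp only [one_div, inv_one]
        rw [← two_mul]
        exact ENNReal.mul_inv_cancel two_ne_zero ENNReal.ofNat_ne_top⟩)
    have := h1.integrable le_rfl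
    simpa [Pi.smul_apply, smul_eq_mul, Pi.mul_def] using this
  have hpos : ∀ a b : ℝ, a ≠ b → 0 < (f a - f b) * (g a - g b) := by
    intro a b hab
    rcases hab.lt_or_gt with h | h
    · exact mul_pos_of_neg_of_neg (sub_neg.mpr (hf h)) (sub_neg.mpr (hg h))
    · exact mul_pos (sub_pos.mpr (hf h)) (sub_pos.mpr (hg h))
  have hnn : 0 ≤ᵐ[μ] fun ω => (f (X ω) - f (Y ω)) * (g (X ω) - g (Y ω)) := by
    filter_upwards with ω
    by_cases h : X ω = Y ω
    · simp [h]
    · exact (hpos _ _ h).le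
  have hae0 := (integral_eq_zero_iff_of_nonneg_ae hnn hint).mp hzero
  have hXY : X =ᵐ[μ] Y := by
    filter_upwards [hae0] with ω hω
    by_contra h
    exact (hpos _ _ h).ne' hω
  refine ⟨hXY, ?_⟩
  -- X is independent of itself
  have hXX : IndepFun X X μ := hindep.congr (ae_eq_refl X) hXY.symm
  have key : ∀ t : ℝ, μ (X ⁻¹' Set.Iic t) = 0 ∨ μ (X ⁻¹' Set.Iic t) = 1 := by
    intro t
    have h := hXX.measure_inter_preimage_eq_mul (Set.Iic t) (Set.Iic t)
      measurableSet_Iic measurableSet_Iic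
    rw [Set.inter_self] at h
    by_cases h0 : μ (X ⁻¹' Set.Iic t) = 0
    · exact Or.inl h0
    · refine Or.inr ?_
      have hne : μ (X ⁻¹' Set.Iic t) ≠ ⊤ := measure_ne_top _ _
      set p := μ (X ⁻¹' Set.Iic t) with hp
      have hr : p.toReal * p.toReal = p.toReal := by
        rw [← ENNReal.toReal_mul, ← h]
      have hr0 : p.toReal ≠ 0 := by
        simp [ENNReal.toReal_eq_zero_iff, h0, hne]
      have hr1 : p.toReal = 1 := by
        have h1 : p.toReal * p.toReal = 1 * p.toReal := by rw [hr, one_mul]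
        exact mul_right_cancel₀ hr0 h1
      rw [← ENNReal.ofReal_toReal hne, hr1]; simp
  set S : Set ℝ := {t | μ (X ⁻¹' Set.Iic t) = 1} with hS
  have hmono : ∀ s t : ℝ, s ≤ t → s ∈ S → t ∈ S := by
    intro s t hst hs
    have hle : μ (X ⁻¹' Set.Iic s) ≤ μ (X ⁻¹' Set.Iic t) :=
      measure_mono (Set.preimage_mono (Set.Iic_subset_Iic.mpr hst))
    rcases key t with h | h
    · rw [hs] at hle; rw [h] at hle; exact absurd hle (by simp)
    · exact h
  have hne : S.Nonempty := by
    by_contra hemp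
    have hall : ∀ n : ℕ, μ (X ⁻¹' Set.Iic (n : ℝ)) = 0 := by
      intro n
      rcases key (n : ℝ) with h | h
      · exact h
      · exact absurd ⟨(n : ℝ), h⟩ hemp
    have hunion : (⋃ n : ℕ, X ⁻¹' Set.Iic (n : ℝ)) = Set.univ := by
      ext ω; simp only [Set.mem_iUnion, Set.mem_preimage, Set.mem_Iic, Set.mem_univ, iff_true]
      exact exists_nat_ge (X ω)
    have := measure_iUnion_null hall
    rw [hunion, measure_univ] at this
    exact one_ne_zero this
  have hbdd : BddBelow S := by
    by_contra hb
    have hall : ∀ n : ℕ, μ (X ⁻¹' Set.Iic (-(n : ℝ))) = 1 := by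
      intro n
      rw [not_bddBelow_iff] at hb
      obtain ⟨t, ht, hlt⟩ := hb (-(n : ℝ))
      exact hmono t _ hlt.le ht
    have hcompl : ∀ n : ℕ, μ ((X ⁻¹' Set.Iic (-(n : ℝ)))ᶜ) = 0 := by
      intro n
      rw [measure_compl (hX measurableSet_Iic) (measure_ne_top _ _), hall n, measure_univ]
      simp
    have hunion : (⋃ n : ℕ, (X ⁻¹' Set.Iic (-(n : ℝ)))ᶜ) = Set.univ := by
      ext ω
      simp only [Set.mem_iUnion, Set.mem_compl_iff, Set.mem_preimage, Set.mem_Iic, not_le,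
        Set.mem_univ, iff_true]
      obtain ⟨n, hn⟩ := exists_nat_ge (-X ω)
      exact ⟨n + 1, by push_cast; linarith⟩
    have := measure_iUnion_null hcompl
    rw [hunion, measure_univ] at this
    exact one_ne_zero this
  set c := sInf S with hc
  refine ⟨c, ?_⟩
  have hgt : μ {ω | c < X ω} = 0 := by
    have hsub : {ω | c < X ω} ⊆ ⋃ n : ℕ, (X ⁻¹' Set.Iic (c + 1 / (n + 1)))ᶜ := by
      intro ω hω
      obtain ⟨n, hn⟩ := exists_nat_one_div_lt (show (0:ℝ) < X ω - c by
        simp only [Set.mem_setOf_eq] at hω; linarith)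
      simp only [Set.mem_iUnion, Set.mem_compl_iff, Set.mem_preimage, Set.mem_Iic, not_le]
      exact ⟨n, by push_cast at hn ⊢; linarith⟩
    refine measure_mono_null hsub (measure_iUnion_null fun n => ?_)
    have hmem : c + 1 / ((n : ℝ) + 1) ∈ S := by
      obtain ⟨t, ht, hlt⟩ := Real.lt_sInf_add_pos hne (by positivity : (0:ℝ) < 1 / ((n:ℝ) + 1))
      exact hmono t _ hlt.le ht
    rw [measure_compl (hX measurableSet_Iic) (measure_ne_top _ _), hmem, measure_univ]
    simp
  have hlt : μ {ω | X ω < c} = 0 := by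
    have hsub : {ω | X ω < c} ⊆ ⋃ n : ℕ, X ⁻¹' Set.Iic (c - 1 / (n + 1)) := by
      intro ω hω
      obtain ⟨n, hn⟩ := exists_nat_one_div_lt (show (0:ℝ) < c - X ω by
        simp only [Set.mem_setOf_eq] at hω; linarith)
      simp only [Set.mem_iUnion, Set.mem_preimage, Set.mem_Iic]
      exact ⟨n, by push_cast at hn ⊢; linarith⟩
    refine measure_mono_null hsub (measure_iUnion_null fun n => ?_)
    rcases key (c - 1 / ((n : ℝ) + 1)) with h | h
    · exact h
    · exfalso
      have : c ≤ c - 1 / ((n : ℝ) + 1) := csInf_le hbdd h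
      have hpos' : (0:ℝ) < 1 / ((n:ℝ) + 1) := by positivity
      linarith
  have : μ {ω | X ω ≠ c} = 0 := by
    refine measure_mono_null (fun ω hω => ?_) (measure_union_null hlt hgt)
    rcases lt_or_gt_of_ne hω with h | h
    · exact Or.inl h
    · exact Or.inr h
  exact this
end
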